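/- Let F : ℝ³ → ℝ be differentiable with F(0) = 0 and |f(u)| = o(|u|) as u → 0, where f := ∇F. If F satisfies conditions (F9) and (**), then F satisfies condition (*). -/
import Mathlib


open RealInnerProductSpace

noncomputable section

/-- Condition (F9) for a differentiable `F : ℝ³ → ℝ` with gradient `f = ∇F`:
`((t²−1)/2)⟨f(u),u⟩ + t⟨f(u),v⟩ + F(u) − F(tu+v) ≤ 0` for all `t ≥ 0`, `u, v ∈ ℝ³`,
with strict inequality whenever `u ≠ tu + v`. -/
def CondF9 (F : EuclideanSpace ℝ (Fin 3) → ℝ) : Prop :=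
  ∀ t : ℝ, 0 ≤ t → ∀ u v : EuclideanSpace ℝ (Fin 3),
    (t ^ 2 - 1) / 2 * ⟪gradient F u, u⟫ + t * ⟪gradient F u, v⟫ + F u - F (t • u + v) ≤ 0 ∧
    (u ≠ t • u + v →
      (t ^ 2 - 1) / 2 * ⟪gradient F u, u⟫ + t * ⟪gradient F u, v⟫ + F u - F (t • u + v) < 0)

/-- Condition (*): whenever `⟨f(u),v⟩ = ⟨f(v),u⟩ > 0` one has
`F(u) − F(v) ≤ (⟨f(u),u⟩² − ⟨f(u),v⟩²)/(2⟨f(u),u⟩)`, with strict inequality if in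
addition `F(u) ≠ F(v)`. -/
def CondStar (F : EuclideanSpace ℝ (Fin 3) → ℝ) : Prop :=
  ∀ u v : EuclideanSpace ℝ (Fin 3),
    ⟪gradient F u, v⟫ = ⟪gradient F v, u⟫ → 0 < ⟪gradient F u, v⟫ →
      (F u - F v ≤ (⟪gradient F u, u⟫ ^ 2 - ⟪gradient F u, v⟫ ^ 2)
          / (2 * ⟪gradient F u, u⟫) ∧
        (F u ≠ F v →
          F u - F v < (⟪gradient F u, u⟫ ^ 2 - ⟪gradient F u, v⟫ ^ 2)
            / (2 * ⟪gradient F u, u⟫)))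

/-- Condition (**): `F` is strictly convex and `⟨f(u),u⟩ > 2F(u)` for all `u ≠ 0`. -/
def CondStarStar (F : EuclideanSpace ℝ (Fin 3) → ℝ) : Prop :=
  StrictConvexOn ℝ Set.univ F ∧
    ∀ u : EuclideanSpace ℝ (Fin 3), u ≠ 0 → 2 * F u < ⟪gradient F u, u⟫

/-- `|f(u)| = o(|u|)` as `u → 0`, for `f = ∇F`. -/
def GradLittleO (F : EuclideanSpace ℝ (Fin 3) → ℝ) : Prop :=
  (fun u => ‖gradient F u‖) =o[nhds (0 : EuclideanSpace ℝ (Fin 3))]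
    fun u : EuclideanSpace ℝ (Fin 3) => ‖u‖

/-- (cf. Remark 5.4 d)).
If `F : ℝ³ → ℝ` is differentiable, `F(0) = 0`, `|∇F(u)| = o(|u|)` as `u → 0`, and `F`
satisfies (F9) and (**), then `F` satisfies (*). -/
theorem statement12 (F : EuclideanSpace ℝ (Fin 3) → ℝ) (hF : Differentiable ℝ F)
    (hF0 : F 0 = 0) (hsmall : GradLittleO F) (hF9 : CondF9 F) (hss : CondStarStar F) :
    CondStar F := by
  intro u v hsym hB
  -- gradient vanishes at 0
  have hgrad0 : gradient F 0 = 0 := by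
    have h := (hsmall.def one_pos).self_of_nhds
    simp only [norm_norm, norm_zero, mul_zero] at h
    exact norm_le_zero_iff.mp h
  -- F is positive away from 0
  have hFpos : ∀ w : EuclideanSpace ℝ (Fin 3), w ≠ 0 → 0 < F w := by
    intro w hw
    have h := (hF9 1 zero_le_one 0 w).2
    simp only [one_smul, smul_zero, zero_add, hgrad0, inner_zero_left, hF0] at h
    have h' := h (Ne.symm hw)
    linarith
  have hu : u ≠ 0 := by
    intro h
    rw [h, hgrad0, inner_zero_left] at hB
    exact lt_irrefl 0 hB
  set A := ⟪gradient F u, u⟫ with hAdef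
  set B := ⟪gradient F u, v⟫ with hBdef
  have hA2 : 2 * F u < A := by
    have h := (hF9 0 le_rfl u 0).2
    simp only [zero_smul, add_zero, inner_zero_right, mul_zero, zero_mul] at h
    have h' := h hu
    rw [hF0] at h'
    linarith
  have hA : 0 < A := lt_of_le_of_lt (by linarith [(hFpos u hu)]) hA2
  set t : ℝ := B / A with htdef
  have ht : 0 ≤ t := le_of_lt (div_pos hB hA)
  have htA : t * A = B := div_mul_cancel₀ B (ne_of_gt hA)
  have hval : t • u + (v - t • u) = v := by abel
  have hinner : ⟪gradient F u, v - t • u⟫ = B - t * A := by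
    rw [inner_sub_right, real_inner_smul_right]
  have key := hF9 t ht u (v - t • u)
  rw [hval, hinner, ← hAdef, htA, sub_self, mul_zero, add_zero] at key
  have ht2 : t ^ 2 * A = t * B := by rw [pow_two, mul_assoc, htA]
  have htB : t * B * A = B ^ 2 := by
    rw [mul_comm t B, mul_assoc, htA, pow_two]
  constructor
  · have h1 := key.1
    rw [le_div_iff₀ (by positivity : (0:ℝ) < 2 * A)]
    nlinarith [h1, ht2, htB, hA]
  · intro hne
    have huv : u ≠ v := fun h => hne (congrArg F h)
    have h1 := key.2 huv
    rw [lt_div_iff₀ (by positivity : (0:ℝ) < 2 * A)]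
    nlinarith [h1, ht2, htB, hA]

end
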